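/- For β > −8π, the function Ψ(x) = (2/β) ln(1 + (β/(8π))(1 − |x|²/R²)) on the disk of radius R centered at the origin satisfies −ΔΨ = (1/Z) e^{−βΨ} with Z = πR²/(1 + β/(8π)), and Ψ = 0 on the boundary |x| = R. -/

import Mathlib

open Real Set

private lemma uu_hasDerivAt (R β m t : ℝ) :
    HasDerivAt (fun s : ℝ => 1 + (β/(8*π))*(1 - (s^2+m)/R^2))
      ((β/(8*π)) * -(2*t/R^2)) t := by
  have h1 : HasDerivAt (fun s : ℝ => s^2 + m) (2*t) t := by
    simpa using ((hasDerivAt_pow 2 t).add_const m)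
  exact (((h1.div_const (R^2)).const_sub 1).const_mul (β/(8*π))).const_add 1

private lemma deriv1 (R β m t : ℝ) (hβ0 : β ≠ 0) (hR : R ≠ 0)
    (hu : 0 < 1 + (β/(8*π))*(1 - (t^2+m)/R^2)) :
    HasDerivAt (fun s : ℝ => (2/β) * Real.log (1 + (β/(8*π))*(1 - (s^2+m)/R^2)))
      (-(t / (2*π*R^2 * (1 + (β/(8*π))*(1 - (t^2+m)/R^2))))) t := by
  have h := ((Real.hasDerivAt_log hu.ne').comp t (uu_hasDerivAt R β m t)).const_mul (2/β)
  have hπ : (π:ℝ) ≠ 0 := Real.pi_ne_zero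
  set u : ℝ := 1 + (β/(8*π))*(1 - (t^2+m)/R^2) with hudef
  have hune : u ≠ 0 := hu.ne'
  refine h.congr_deriv ?_
  field_simp
  ring

private lemma deriv2 (R β m t : ℝ) (hR : R ≠ 0)
    (hu : 0 < 1 + (β/(8*π))*(1 - (t^2+m)/R^2)) :
    HasDerivAt (fun τ : ℝ => -(τ / (2*π*R^2 * (1 + (β/(8*π))*(1 - (τ^2+m)/R^2)))))
      (-((1*(2*π*R^2*(1 + (β/(8*π))*(1 - (t^2+m)/R^2)))
           - t*(2*π*R^2*((β/(8*π)) * -(2*t/R^2))))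
          / (2*π*R^2*(1 + (β/(8*π))*(1 - (t^2+m)/R^2)))^2)) t := by
  have hπ : (0:ℝ) < π := Real.pi_pos
  have hden : (2*π*R^2*(1 + (β/(8*π))*(1 - (t^2+m)/R^2))) ≠ 0 := by
    have hR2 : (0:ℝ) < R^2 := by positivity
    have h2p : (0:ℝ) < 2*π*R^2 := by positivity
    exact (mul_pos h2p hu).ne'
  exact ((hasDerivAt_id t).div ((uu_hasDerivAt R β m t).const_mul (2*π*R^2)) hden).neg

private lemma secderiv (R β m t : ℝ) (hβ0 : β ≠ 0) (hR : R ≠ 0)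
    (hu : 0 < 1 + (β/(8*π))*(1 - (t^2+m)/R^2)) :
    deriv (fun τ => deriv
        (fun s => (2/β) * Real.log (1 + (β/(8*π))*(1 - (s^2+m)/R^2))) τ) t
      = -((1*(2*π*R^2*(1 + (β/(8*π))*(1 - (t^2+m)/R^2)))
           - t*(2*π*R^2*((β/(8*π)) * -(2*t/R^2))))
          / (2*π*R^2*(1 + (β/(8*π))*(1 - (t^2+m)/R^2)))^2) := by
  have hopen : IsOpen {τ : ℝ | 0 < 1 + (β/(8*π))*(1 - (τ^2+m)/R^2)} := by
    apply isOpen_lt continuous_const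
    fun_prop
  have hmem : {τ : ℝ | 0 < 1 + (β/(8*π))*(1 - (τ^2+m)/R^2)} ∈ nhds t := hopen.mem_nhds hu
  have hev : (fun τ => deriv
        (fun s => (2/β) * Real.log (1 + (β/(8*π))*(1 - (s^2+m)/R^2))) τ)
      =ᶠ[nhds t] (fun τ => -(τ / (2*π*R^2 * (1 + (β/(8*π))*(1 - (τ^2+m)/R^2))))) := by
    filter_upwards [hmem] with τ hτ
    exact (deriv1 R β m τ hβ0 hR hτ).deriv
  rw [hev.deriv_eq]
  exact (deriv2 R β m t hR hu).deriv

private lemma final_algebra (p R c u a b : ℝ) (hp : 0 < p) (hR : 0 < R)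
    (hu : 0 < u) (hc : 0 < 1 + c)
    (hkey : R^2 * u = R^2*(1+c) - c*(a^2+b^2)) :
    -( -((1*(2*p*R^2*u) - a*(2*p*R^2*(c * -(2*a/R^2))))/(2*p*R^2*u)^2)
      + -((1*(2*p*R^2*u) - b*(2*p*R^2*(c * -(2*b/R^2))))/(2*p*R^2*u)^2))
    = 1/(p*R^2/(1+c)) * ((u^2)⁻¹) := by
  have hpne : p ≠ 0 := hp.ne'
  have hRne : R ≠ 0 := hR.ne'
  have hune : u ≠ 0 := hu.ne'
  have hcne : (1 + c) ≠ 0 := hc.ne'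
  field_simp
  linear_combination 2 * hkey

/-- The Laplacian on ℝ² = ℝ × ℝ, as the sum of the two second partial
derivatives. -/
noncomputable def lap2 (f : ℝ × ℝ → ℝ) (p : ℝ × ℝ) : ℝ :=
  deriv (fun t => deriv (fun s => f (s, p.2)) t) p.1 +
  deriv (fun t => deriv (fun s => f (p.1, s)) t) p.2

/-- The explicit radial stream function on the disk of radius R solves the
mean-field equation −ΔΨ = (1/Z)e^{−βΨ} with Z = πR²/(1+β/8π), and vanishes
on the boundary. -/
theorem disk_meanField_solution (R β : ℝ) (hR : 0 < R)
    (hβ : -8 * π < β) (hβ0 : β ≠ 0)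
    (Ψ : ℝ × ℝ → ℝ)
    (hΨ : ∀ x : ℝ × ℝ,
      Ψ x = (2 / β) * Real.log (1 + (β / (8 * π)) * (1 - (x.1 ^ 2 + x.2 ^ 2) / R ^ 2)))
    (Z : ℝ) (hZ : Z = π * R ^ 2 / (1 + β / (8 * π))) :
    (∀ x : ℝ × ℝ, x.1 ^ 2 + x.2 ^ 2 < R ^ 2 →
      - lap2 Ψ x = (1 / Z) * Real.exp (-β * Ψ x)) ∧
    (∀ x : ℝ × ℝ, x.1 ^ 2 + x.2 ^ 2 = R ^ 2 → Ψ x = 0) := by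
  have hπ : (0:ℝ) < π := Real.pi_pos
  have h8 : (0:ℝ) < 8 * π := by positivity
  have hc1 : (-1:ℝ) < β / (8 * π) := by
    rw [lt_div_iff₀ h8]; linarith
  have hc1' : (0:ℝ) < 1 + β / (8 * π) := by linarith
  constructor
  · intro x hx
    have hq1 : (x.1 ^ 2 + x.2 ^ 2) / R ^ 2 < 1 := by
      rw [div_lt_one (by positivity)]; exact hx
    have hq0 : 0 ≤ (x.1 ^ 2 + x.2 ^ 2) / R ^ 2 := by positivity
    have hu : 0 < 1 + (β/(8*π))*(1 - (x.1 ^ 2 + x.2 ^ 2) / R ^ 2) := by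
      nlinarith [mul_pos hc1' (sub_pos.mpr hq1)]
    have hf1 : (fun s => Ψ (s, x.2))
        = (fun s => (2/β) * Real.log (1 + (β/(8*π))*(1 - (s^2 + x.2^2)/R^2))) := by
      funext s; rw [hΨ]
    have hA := secderiv R β (x.2^2) x.1 hβ0 hR.ne' hu
    have hf2 : (fun s => Ψ (x.1, s))
        = (fun s => (2/β) * Real.log (1 + (β/(8*π))*(1 - (s^2 + x.1^2)/R^2))) := by
      funext s; rw [hΨ]; ring_nf
    have hu2 : 0 < 1 + (β/(8*π))*(1 - (x.2 ^ 2 + x.1 ^ 2) / R ^ 2) := by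
      rw [add_comm (x.2^2)]; exact hu
    have hB := secderiv R β (x.1^2) x.2 hβ0 hR.ne' hu2
    have hlap : lap2 Ψ x
        = -((1*(2*π*R^2*(1 + (β/(8*π))*(1 - (x.1^2+x.2^2)/R^2)))
             - x.1*(2*π*R^2*((β/(8*π)) * -(2*x.1/R^2))))
            / (2*π*R^2*(1 + (β/(8*π))*(1 - (x.1^2+x.2^2)/R^2)))^2)
          + -((1*(2*π*R^2*(1 + (β/(8*π))*(1 - (x.2^2+x.1^2)/R^2)))
             - x.2*(2*π*R^2*((β/(8*π)) * -(2*x.2/R^2))))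
            / (2*π*R^2*(1 + (β/(8*π))*(1 - (x.2^2+x.1^2)/R^2)))^2) := by
      unfold lap2
      rw [hf1, hf2, hA, hB]
    have hexp : Real.exp (-β * Ψ x)
        = ((1 + (β/(8*π))*(1 - (x.1^2+x.2^2)/R^2))^2)⁻¹ := by
      rw [hΨ]
      have h2 : -β * ((2/β) * Real.log (1 + (β/(8*π))*(1 - (x.1^2+x.2^2)/R^2)))
          = -(2 * Real.log (1 + (β/(8*π))*(1 - (x.1^2+x.2^2)/R^2))) := by
        field_simp
      rw [h2, Real.exp_neg, two_mul, Real.exp_add, Real.exp_log hu, ← sq]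
    rw [hlap, hexp, hZ]
    rw [add_comm (x.2^2) (x.1^2)]
    have hkey : R^2 * (1 + (β/(8*π))*(1 - (x.1^2+x.2^2)/R^2))
        = R^2*(1+β/(8*π)) - (β/(8*π))*(x.1^2+x.2^2) := by
      field_simp; ring
    exact final_algebra π R (β/(8*π)) _ x.1 x.2 hπ hR hu hc1' hkey
  · intro x hx
    rw [hΨ, hx, div_self (by positivity : (R:ℝ)^2 ≠ 0)]
    simp
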